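/- For every positive integer m there exists a subset X ⊆ {1,…,m} such that every quadruple (x₁,x₂,x₃,x₄) ∈ X⁴ satisfying x₁ + x₂ + x₃ = 3·x₄ has x₁ = x₂ = x₃ = x₄, and |X| ≥ m / e^{20·√(ln m)}. -/

import Mathlib

open Finset Real Behrend

lemma avg3_sphere {E : Type*} [NormedAddCommGroup E] [InnerProductSpace ℝ E]
    {a b c w : E} (hna : ‖a‖ = ‖w‖) (hnb : ‖b‖ = ‖w‖) (hnc : ‖c‖ = ‖w‖)
    (h : a + b + c = (3 : ℝ) • w) : a = w ∧ b = w ∧ c = w := by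
  rcases eq_or_ne ‖w‖ 0 with hr | hr
  · have hw : w = 0 := norm_eq_zero.mp hr
    have ha : a = 0 := norm_eq_zero.mp (by rw [hna, hr])
    have hb : b = 0 := norm_eq_zero.mp (by rw [hnb, hr])
    have hc : c = 0 := norm_eq_zero.mp (by rw [hnc, hr])
    exact ⟨by rw [ha, hw], by rw [hb, hw], by rw [hc, hw]⟩
  · set r := ‖w‖ with hrdef
    have e1 : (inner ℝ (a + b + c) (a + b + c) : ℝ) = 9 * r ^ 2 := by
      rw [h]
      rw [real_inner_smul_left, real_inner_smul_right, real_inner_self_eq_norm_sq]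
      ring
    have e2 : (inner ℝ (a + b + c) (a + b + c) : ℝ)
        = 3 * r ^ 2 + 2 * ((inner ℝ a b : ℝ) + inner ℝ a c + inner ℝ b c) := by
      simp only [inner_add_left, inner_add_right]
      rw [real_inner_self_eq_norm_sq, real_inner_self_eq_norm_sq,
        real_inner_self_eq_norm_sq, hna, hnb, hnc,
        real_inner_comm b a, real_inner_comm c a, real_inner_comm c b]
      ring
    have hab' : (inner ℝ a b : ℝ) ≤ r ^ 2 := by
      have := real_inner_le_norm a b; rw [hna, hnb] at this; nlinarith
    have hac' : (inner ℝ a c : ℝ) ≤ r ^ 2 := by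
      have := real_inner_le_norm a c; rw [hna, hnc] at this; nlinarith
    have hbc' : (inner ℝ b c : ℝ) ≤ r ^ 2 := by
      have := real_inner_le_norm b c; rw [hnb, hnc] at this; nlinarith
    have hsum : (inner ℝ a b : ℝ) + inner ℝ a c + inner ℝ b c = 3 * r ^ 2 := by linarith [e1.symm.trans e2]
    have hab : (inner ℝ a b : ℝ) = ‖a‖ * ‖b‖ := by rw [hna, hnb]; nlinarith
    have hac : (inner ℝ a c : ℝ) = ‖a‖ * ‖c‖ := by rw [hna, hnc]; nlinarith
    have hAB : a = b := by
      have := (inner_eq_norm_mul_iff_real).mp hab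
      rw [hna, hnb] at this
      exact smul_right_injective E hr this
    have hAC : a = c := by
      have := (inner_eq_norm_mul_iff_real).mp hac
      rw [hna, hnc] at this
      exact smul_right_injective E hr this
    have haw : a = w := by
      rw [← hAB, ← hAC] at h
      have : (3 : ℝ) • a = (3 : ℝ) • w := by rw [← h]; module
      exact smul_right_injective E (by norm_num) this
    exact ⟨haw, hAB ▸ haw, hAC ▸ haw⟩

lemma sphere_avg3 {n d k : ℕ} {a b c w : Fin n → ℕ}
    (ha : a ∈ Behrend.sphere n d k) (hb : b ∈ Behrend.sphere n d k)
    (hc : c ∈ Behrend.sphere n d k) (hw : w ∈ Behrend.sphere n d k)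
    (h : a + b + c = 3 • w) : a = w ∧ b = w ∧ c = w := by
  set F : (Fin n → ℕ) → EuclideanSpace ℝ (Fin n) :=
    fun x => (WithLp.equiv 2 _).symm ((↑) ∘ x : Fin n → ℝ) with hF
  have hadd : F a + F b + F c = (3 : ℝ) • F w := by
    ext i
    have hi : a i + b i + c i = 3 * w i := by
      have := congr_fun h i
      simpa using this
    simp only [hF, WithLp.equiv_symm_apply, PiLp.toLp_apply, PiLp.add_apply, PiLp.smul_apply,
      Function.comp_apply, smul_eq_mul]
    have : (a i : ℝ) + b i + c i = 3 * (w i) := by exact_mod_cast hi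
    linarith
  have key := avg3_sphere (E := EuclideanSpace ℝ (Fin n))
    ((Behrend.norm_of_mem_sphere ha).trans (Behrend.norm_of_mem_sphere hw).symm)
    ((Behrend.norm_of_mem_sphere hb).trans (Behrend.norm_of_mem_sphere hw).symm)
    ((Behrend.norm_of_mem_sphere hc).trans (Behrend.norm_of_mem_sphere hw).symm)
    hadd
  have inj : ∀ {x y : Fin n → ℕ}, F x = F y → x = y := by
    intro x y hxy
    funext i
    have := congr_fun (congrArg (WithLp.equiv 2 (Fin n → ℝ)) hxy) i
    simpa using Nat.cast_injective (R := ℝ) (by simpa [hF] using this)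
  exact ⟨inj key.1, inj key.2.1, inj key.2.2⟩

lemma map_lt_pow {n B : ℕ} {a : Fin n → ℕ} (hB : 0 < B) (ha : ∀ i, a i < B) :
    Behrend.map B a < B ^ n := by
  induction n with
  | zero => simpa using Behrend.map_zero B a
  | succ n ih =>
    rw [Behrend.map_succ']
    have h2 : Behrend.map B (a ∘ Fin.succ) + 1 ≤ B ^ n := ih (fun i => ha i.succ)
    have h1 : a 0 + 1 ≤ B := ha 0
    have : (Behrend.map B (a ∘ Fin.succ) + 1) * B ≤ B ^ n * B :=
      Nat.mul_le_mul_right _ h2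
    rw [pow_succ]
    calc a 0 + Behrend.map B (a ∘ Fin.succ) * B + 1
        ≤ Behrend.map B (a ∘ Fin.succ) * B + B := by omega
      _ = (Behrend.map B (a ∘ Fin.succ) + 1) * B := by ring
      _ ≤ B ^ n * B := this

lemma behrend_construction (n d m : ℕ) (hd : 1 ≤ d) (hm : (3 * d) ^ n ≤ m) :
    ∃ X : Finset ℕ, X ⊆ Finset.Icc 1 m ∧
      (∀ x₁ ∈ X, ∀ x₂ ∈ X, ∀ x₃ ∈ X, ∀ x₄ ∈ X,
        x₁ + x₂ + x₃ = 3 * x₄ → x₁ = x₄ ∧ x₂ = x₄ ∧ x₃ = x₄) ∧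
      ((d ^ n : ℕ) : ℝ) / ((n * d ^ 2 : ℕ) : ℝ) ≤ (X.card : ℝ) := by
  obtain ⟨k, hk⟩ := Behrend.exists_large_sphere n d
  set S := Behrend.sphere n d k with hS
  have hSbox : ∀ a ∈ S, ∀ i, a i < d := fun a ha i =>
    Behrend.mem_box.mp (Behrend.sphere_subset_box ha) i
  have hdpos : 0 < 3 * d := by omega
  set f : (Fin n → ℕ) → ℕ := fun a => Behrend.map (3 * d) a + 1 with hf
  have hmaplt : ∀ a ∈ S, Behrend.map (3 * d) a < (3 * d) ^ n := fun a ha =>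
    map_lt_pow hdpos (fun i => (hSbox a ha i).trans_le (by omega))
  have hinj : Set.InjOn f S := by
    intro a ha b hb hab
    have : Behrend.map (3 * d) a = Behrend.map (3 * d) b := by
      simpa [hf] using hab
    exact Behrend.map_injOn (fun i => (hSbox a ha i).trans_le (by omega))
      (fun i => (hSbox b hb i).trans_le (by omega)) this
  refine ⟨S.image f, ?_, ?_, ?_⟩
  · intro x hx
    obtain ⟨a, ha, rfl⟩ := Finset.mem_image.mp hx
    rw [Finset.mem_Icc]
    have h1 := hmaplt a ha
    simp only [hf]
    omega
  · intro x₁ hx₁ x₂ hx₂ x₃ hx₃ x₄ hx₄ heq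
    obtain ⟨a₁, ha₁, rfl⟩ := Finset.mem_image.mp hx₁
    obtain ⟨a₂, ha₂, rfl⟩ := Finset.mem_image.mp hx₂
    obtain ⟨a₃, ha₃, rfl⟩ := Finset.mem_image.mp hx₃
    obtain ⟨a₄, ha₄, rfl⟩ := Finset.mem_image.mp hx₄
    have hmapeq : Behrend.map (3 * d) a₁ + Behrend.map (3 * d) a₂ + Behrend.map (3 * d) a₃
        = 3 * Behrend.map (3 * d) a₄ := by simp only [hf] at heq; omega
    have hvec : Behrend.map (3 * d) (a₁ + a₂ + a₃) = Behrend.map (3 * d) (3 • a₄) := by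
      rw [map_add, map_add, map_nsmul, smul_eq_mul]
      exact hmapeq
    have hveceq : a₁ + a₂ + a₃ = 3 • a₄ := by
      refine Behrend.map_injOn (fun i => ?_) (fun i => ?_) hvec
      · have h1 := hSbox a₁ ha₁ i; have h2 := hSbox a₂ ha₂ i; have h3 := hSbox a₃ ha₃ i
        simp only [Pi.add_apply]; omega
      · have h4 := hSbox a₄ ha₄ i
        simp only [Pi.smul_apply, smul_eq_mul]; omega
    obtain ⟨e₁, e₂, e₃⟩ := sphere_avg3 ha₁ ha₂ ha₃ ha₄ hveceq
    exact ⟨by rw [e₁], by rw [e₂], by rw [e₃]⟩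
  · rw [Finset.card_image_of_injOn hinj]
    simpa using hk


/-- Behrend-type construction. For every positive integer `m` there is
a subset `X ⊆ {1,…,m}` with no non-trivial solution to `x₁ + x₂ + x₃ = 3·x₄` and with
`|X| ≥ m / e^{20·√(ln m)}`. -/
theorem behrend_type_set (m : ℕ) (hm : 0 < m) :
    ∃ X : Finset ℕ,
      X ⊆ Finset.Icc 1 m ∧
      (∀ x₁ ∈ X, ∀ x₂ ∈ X, ∀ x₃ ∈ X, ∀ x₄ ∈ X,
        x₁ + x₂ + x₃ = 3 * x₄ → x₁ = x₄ ∧ x₂ = x₄ ∧ x₃ = x₄) ∧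
      (m : ℝ) / Real.exp (20 * Real.sqrt (Real.log m)) ≤ (X.card : ℝ) := by
  have hm1 : (1 : ℝ) ≤ (m : ℝ) := by exact_mod_cast hm
  have hmpos : (0 : ℝ) < (m : ℝ) := by linarith
  set t := Real.log (m : ℝ) with htdef
  have ht0 : 0 ≤ t := Real.log_nonneg hm1
  have hexpt : Real.exp t = m := Real.exp_log hmpos
  set s := Real.sqrt t with hsdef
  have hs0 : 0 ≤ s := Real.sqrt_nonneg t
  have hssq : s ^ 2 = t := Real.sq_sqrt ht0
  by_cases hcase : t ≤ 400
  · -- small case: X = {m}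
    refine ⟨{m}, ?_, ?_, ?_⟩
    · intro x hx
      simp only [Finset.mem_singleton] at hx
      subst hx
      exact Finset.mem_Icc.mpr ⟨hm, le_refl _⟩
    · intro x₁ hx₁ x₂ hx₂ x₃ hx₃ x₄ hx₄ _
      simp only [Finset.mem_singleton] at hx₁ hx₂ hx₃ hx₄
      exact ⟨by rw [hx₁, hx₄], by rw [hx₂, hx₄], by rw [hx₃, hx₄]⟩
    · have hs20 : s ≤ 20 := by
        rw [hsdef, show (20 : ℝ) = Real.sqrt 400 by
          rw [show (400 : ℝ) = 20 ^ 2 by norm_num, Real.sqrt_sq (by norm_num)]]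
        exact Real.sqrt_le_sqrt hcase
      have hts : t ≤ 20 * s := by nlinarith
      rw [Finset.card_singleton, Nat.cast_one, div_le_one (Real.exp_pos _)]
      calc (m : ℝ) = Real.exp t := hexpt.symm
        _ ≤ Real.exp (20 * s) := Real.exp_le_exp.mpr hts
  · push_neg at hcase
    have hs20 : 20 < s := by
      rw [hsdef, show (20 : ℝ) = Real.sqrt 400 by
        rw [show (400 : ℝ) = 20 ^ 2 by norm_num, Real.sqrt_sq (by norm_num)]]
      exact Real.sqrt_lt_sqrt (by norm_num) hcase
    have hspos : 0 < s := by linarith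
    set n := ⌈s⌉₊ with hndef
    have hn_lb : s ≤ (n : ℝ) := Nat.le_ceil s
    have hn_ub : (n : ℝ) ≤ s + 1 := (Nat.ceil_lt_add_one hs0).le
    have hnpos : 0 < n := Nat.ceil_pos.mpr hspos
    have hnR : (0 : ℝ) < (n : ℝ) := by exact_mod_cast hnpos
    set q := t / (n : ℝ) with hqdef
    have hq_lb : 19 ≤ q := by
      have h1 : s - 1 ≤ t / (s + 1) := by
        rw [le_div_iff₀ (by linarith)]
        nlinarith
      have h2 : t / (s + 1) ≤ t / (n : ℝ) := by gcongr
      linarith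
    have hq_ub : q ≤ s := by
      have h2 : t / (n : ℝ) ≤ t / s := by gcongr
      have h3 : t / s = s := by rw [← hssq, sq]; field_simp
      linarith
    have hexpq : 20 ≤ Real.exp q := by
      have := Real.add_one_le_exp q
      linarith
    set d := ⌊Real.exp q / 3⌋₊ with hddef
    have hd_ub : (d : ℝ) ≤ Real.exp q / 3 := Nat.floor_le (by positivity)
    have hd_lb : Real.exp q / 4 ≤ (d : ℝ) := by
      have h1 : Real.exp q / 3 - 1 < (d : ℝ) := Nat.sub_one_lt_floor _
      linarith
    have hd1 : 1 ≤ d := by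
      have : (1 : ℝ) ≤ (d : ℝ) := by linarith
      exact_mod_cast this
    have hqn : q * (n : ℝ) = t := by
      rw [hqdef]; field_simp
    have h3dm : (3 * d) ^ n ≤ m := by
      have hr : ((3 * d : ℕ) : ℝ) ^ n ≤ (m : ℝ) := by
        have h1 : ((3 * d : ℕ) : ℝ) ≤ Real.exp q := by push_cast; linarith
        calc ((3 * d : ℕ) : ℝ) ^ n ≤ (Real.exp q) ^ n :=
              pow_le_pow_left₀ (by positivity) h1 n
          _ = Real.exp (q * n) := by rw [← Real.exp_nat_mul, mul_comm]
          _ = (m : ℝ) := by rw [hqn, hexpt]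
      exact_mod_cast hr
    obtain ⟨X, hX1, hX2, hX3⟩ := behrend_construction n d m hd1 h3dm
    refine ⟨X, hX1, hX2, le_trans ?_ hX3⟩
    -- remains: m / exp (20 s) ≤ d^n / (n d²)
    push_cast
    have hdR : (0 : ℝ) < (d : ℝ) := by linarith
    have hden_pos : (0 : ℝ) < (n : ℝ) * (d : ℝ) ^ 2 := by positivity
    have hlog4 : Real.log 4 ≤ 1.39 := by
      rw [show (4 : ℝ) = 2 ^ (2 : ℕ) by norm_num, Real.log_pow]
      push_cast
      linarith [Real.log_two_lt_d9]
    have hlog4' : (0 : ℝ) ≤ Real.log 4 := Real.log_nonneg (by norm_num)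
    have h4n : (4 : ℝ) ^ n = Real.exp ((n : ℝ) * Real.log 4) := by
      rw [Real.exp_nat_mul, Real.exp_log (by norm_num : (0:ℝ) < 4)]
    have hDn : Real.exp t / 4 ^ n ≤ (d : ℝ) ^ n := by
      calc Real.exp t / 4 ^ n = (Real.exp q / 4) ^ n := by
            rw [div_pow, ← Real.exp_nat_mul, mul_comm, hqn]
        _ ≤ (d : ℝ) ^ n := pow_le_pow_left₀ (by positivity) hd_lb n
    have hden : (n : ℝ) * (d : ℝ) ^ 2 ≤ Real.exp ((n : ℝ) + 2 * q) := by
      have h1 : (d : ℝ) ^ 2 ≤ Real.exp (2 * q) := by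
        have hdq : (d : ℝ) ≤ Real.exp q := by linarith
        calc (d : ℝ) ^ 2 ≤ (Real.exp q) ^ 2 := pow_le_pow_left₀ (Nat.cast_nonneg d) hdq 2
          _ = Real.exp (2 * q) := by rw [two_mul, Real.exp_add, pow_two]
      have h2 : (n : ℝ) ≤ Real.exp (n : ℝ) := by
        have := Real.add_one_le_exp (n : ℝ); linarith
      calc (n : ℝ) * (d : ℝ) ^ 2 ≤ Real.exp (n : ℝ) * Real.exp (2 * q) := by
            apply mul_le_mul h2 h1 (by positivity) (by positivity)
        _ = Real.exp ((n : ℝ) + 2 * q) := (Real.exp_add _ _).symm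
    have hscalar : (n : ℝ) * Real.log 4 + (n : ℝ) + 2 * q ≤ 20 * s := by
      have h1 : (n : ℝ) * Real.log 4 ≤ (s + 1) * 1.39 := by
        apply mul_le_mul hn_ub hlog4 hlog4' (by linarith)
      nlinarith
    rw [div_le_div_iff₀ (Real.exp_pos _) hden_pos, ← hexpt]
    calc Real.exp t * ((n : ℝ) * (d : ℝ) ^ 2)
        ≤ Real.exp t * Real.exp ((n : ℝ) + 2 * q) := by
          exact mul_le_mul_of_nonneg_left hden (Real.exp_pos _).le
      _ = Real.exp (t + ((n : ℝ) + 2 * q)) := (Real.exp_add _ _).symm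
      _ ≤ Real.exp (t + 20 * s - (n : ℝ) * Real.log 4) := by
          apply Real.exp_le_exp.mpr; linarith
      _ = Real.exp t / 4 ^ n * Real.exp (20 * s) := by
          rw [h4n, ← Real.exp_sub, ← Real.exp_add]; ring_nf
      _ ≤ (d : ℝ) ^ n * Real.exp (20 * s) := by
          exact mul_le_mul_of_nonneg_right hDn (Real.exp_pos _).le
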